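/- For every fair-chores instance with n >= 3 agents, there exists a connected MMS allocation A with egalitarian welfare EW(A) >= (n/2) * OPT_E (note that OPT_E <= 0, so this says the loss factor in egalitarian welfare is at most n/2). Hence the price of MMS with respect to egalitarian welfare for chores is at most n/2. -/

import Mathlib

open Finset

noncomputable section

/-- The value of a bundle `S` of items under additive (item-level) valuation `v`. -/
def bundleVal {m : ℕ} (v : Fin m → ℝ) (S : Finset (Fin m)) : ℝ := ∑ e ∈ S, v e

/-- A bundle is connected if it is an interval of the line `e_1, …, e_m`. -/
def IsConnBundle {m : ℕ} (S : Finset (Fin m)) : Prop :=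
  ∀ a ∈ S, ∀ c ∈ S, ∀ b : Fin m, a ≤ b → b ≤ c → b ∈ S

/-- A connected allocation: pairwise disjoint connected bundles covering all items. -/
def ConnAlloc (n m : ℕ) (A : Fin n → Finset (Fin m)) : Prop :=
  (∀ i, IsConnBundle (A i)) ∧
  (∀ i j : Fin n, i ≠ j → Disjoint (A i) (A j)) ∧
  (∀ e : Fin m, ∃ i, e ∈ A i)

/-- The maximin share of an agent with valuation `v`: the maximum over connected
`n`-partitions of the minimum bundle value. -/
def mmsVal (n m : ℕ) (v : Fin m → ℝ) : ℝ :=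
  sSup { x : ℝ | ∃ A : Fin n → Finset (Fin m), ConnAlloc n m A ∧ x = ⨅ j, bundleVal v (A j) }

/-- Utilitarian welfare of an allocation. -/
def utilW (n m : ℕ) (v : Fin n → Fin m → ℝ) (A : Fin n → Finset (Fin m)) : ℝ :=
  ∑ i, bundleVal (v i) (A i)

/-- Egalitarian welfare of an allocation. -/
def egalW (n m : ℕ) (v : Fin n → Fin m → ℝ) (A : Fin n → Finset (Fin m)) : ℝ :=
  ⨅ i, bundleVal (v i) (A i)

/-- Optimal utilitarian welfare over all connected allocations. -/
def optU (n m : ℕ) (v : Fin n → Fin m → ℝ) : ℝ :=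
  sSup { x : ℝ | ∃ A, ConnAlloc n m A ∧ x = utilW n m v A }

/-- Optimal egalitarian welfare over all connected allocations. -/
def optE (n m : ℕ) (v : Fin n → Fin m → ℝ) : ℝ :=
  sSup { x : ℝ | ∃ A, ConnAlloc n m A ∧ x = egalW n m v A }


namespace Chores

variable {m n : ℕ}

lemma bundleVal_nonpos {v : Fin m → ℝ} (hv : ∀ e, v e ≤ 0) (S : Finset (Fin m)) :
    bundleVal v S ≤ 0 :=
  Finset.sum_nonpos (fun e _ => hv e)

lemma bundleVal_anti {v : Fin m → ℝ} (hv : ∀ e, v e ≤ 0) {S T : Finset (Fin m)}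
    (hST : S ⊆ T) : bundleVal v T ≤ bundleVal v S := by
  have h1 : bundleVal v T = bundleVal v S + bundleVal v (T \ S) := by
    rw [bundleVal, bundleVal, bundleVal, ← Finset.sum_union (Finset.disjoint_sdiff),
      Finset.union_sdiff_of_subset hST]
  have h2 : bundleVal v (T \ S) ≤ 0 := bundleVal_nonpos hv _
  linarith

lemma bundleVal_union {v : Fin m → ℝ} {S T : Finset (Fin m)} (h : Disjoint S T) :
    bundleVal v (S ∪ T) = bundleVal v S + bundleVal v T :=
  Finset.sum_union h

/-- the trivial allocation -/
def trivAlloc (n m : ℕ) (hn : 0 < n) : Fin n → Finset (Fin m) :=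
  fun i => if i = ⟨0, hn⟩ then univ else ∅

lemma isConn_empty : IsConnBundle (∅ : Finset (Fin m)) := by
  intro a ha; simp at ha

lemma isConn_univ : IsConnBundle (univ : Finset (Fin m)) := by
  intro a _ c _ b _ _; simp

lemma isConn_inter {S T : Finset (Fin m)} (hS : IsConnBundle S) (hT : IsConnBundle T) :
    IsConnBundle (S ∩ T) := by
  intro a ha c hc b hab hbc
  rw [mem_inter] at *
  exact ⟨hS a ha.1 c hc.1 b hab hbc, hT a ha.2 c hc.2 b hab hbc⟩

lemma trivAlloc_conn (hn : 0 < n) : ConnAlloc n m (trivAlloc n m hn) := by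
  refine ⟨fun i => ?_, fun i j hij => ?_, fun e => ⟨⟨0, hn⟩, by simp [trivAlloc]⟩⟩
  · by_cases h : i = ⟨0, hn⟩ <;> simp [trivAlloc, h, isConn_empty, isConn_univ]
  · by_cases h : i = ⟨0, hn⟩
    · have : j ≠ ⟨0, hn⟩ := h ▸ hij.symm
      simp [trivAlloc, h, this]
    · simp [trivAlloc, h]

lemma optE_set_finite {v : Fin n → Fin m → ℝ} :
    {x : ℝ | ∃ A, ConnAlloc n m A ∧ x = egalW n m v A}.Finite := by
  have : {x : ℝ | ∃ A, ConnAlloc n m A ∧ x = egalW n m v A}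
      ⊆ (fun A => egalW n m v A) '' Set.univ := by
    rintro x ⟨A, _, rfl⟩; exact ⟨A, trivial, rfl⟩
  exact Set.Finite.subset (Set.toFinite _) this

lemma optE_mem (hn : 0 < n) {v : Fin n → Fin m → ℝ} :
    ∃ A, ConnAlloc n m A ∧ optE n m v = egalW n m v A := by
  have hne : {x : ℝ | ∃ A, ConnAlloc n m A ∧ x = egalW n m v A}.Nonempty :=
    ⟨_, trivAlloc n m hn, trivAlloc_conn hn, rfl⟩
  exact hne.csSup_mem optE_set_finite

lemma sum_bundleVal (v : Fin m → ℝ) {A : Fin n → Finset (Fin m)} (hA : ConnAlloc n m A) :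
    ∑ i, bundleVal v (A i) = bundleVal v univ := by
  obtain ⟨-, hdisj, hcov⟩ := hA
  have hbu : (univ : Finset (Fin n)).biUnion A = univ := by
    ext e
    simp only [mem_biUnion, mem_univ, true_and, iff_true]
    exact hcov e
  have hpd : ((univ : Finset (Fin n)) : Set (Fin n)).PairwiseDisjoint A := by
    intro i _ j _ hij
    exact hdisj i j hij
  rw [bundleVal, ← hbu, Finset.sum_biUnion hpd]
  rfl

lemma inf_le_piece {f : Fin n → ℝ} (i : Fin n) : (⨅ j, f j) ≤ f i := by
  haveI : Nonempty (Fin n) := ⟨i⟩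
  exact ciInf_le (Set.Finite.bddBelow (Set.toFinite _)) i

lemma le_inf_pieces {f : Fin n → ℝ} {a : ℝ} (hn : 0 < n) (h : ∀ i, a ≤ f i) :
    a ≤ ⨅ j, f j := by
  haveI : Nonempty (Fin n) := ⟨⟨0, hn⟩⟩
  exact le_ciInf h

lemma mms_set_nonempty (hn : 0 < n) (v : Fin m → ℝ) :
    { x : ℝ | ∃ A : Fin n → Finset (Fin m), ConnAlloc n m A ∧
        x = ⨅ j, bundleVal v (A j) }.Nonempty :=
  ⟨_, trivAlloc n m hn, trivAlloc_conn hn, rfl⟩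

lemma mms_mem (hn : 0 < n) (v : Fin m → ℝ) :
    ∃ A, ConnAlloc n m A ∧ mmsVal n m v = ⨅ j, bundleVal v (A j) := by
  have hfin : { x : ℝ | ∃ A : Fin n → Finset (Fin m), ConnAlloc n m A ∧
      x = ⨅ j, bundleVal v (A j) }.Finite := by
    apply Set.Finite.subset (Set.toFinite
      ((fun A : Fin n → Finset (Fin m) => ⨅ j, bundleVal v (A j)) '' Set.univ))
    rintro x ⟨A, _, rfl⟩; exact ⟨A, trivial, rfl⟩
  exact (mms_set_nonempty hn v).csSup_mem hfin

lemma mmsVal_le (hn : 0 < n) (v : Fin m → ℝ) (hnorm : bundleVal v univ = -1) :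
    mmsVal n m v ≤ -(1/n) := by
  apply csSup_le (mms_set_nonempty hn v)
  rintro x ⟨A, hA, rfl⟩
  have hsum := sum_bundleVal v hA
  rw [hnorm] at hsum
  have hcard : ∀ i : Fin n, (⨅ j, bundleVal v (A j)) ≤ bundleVal v (A i) :=
    fun i => inf_le_piece i
  have h2 : (n : ℝ) * (⨅ j, bundleVal v (A j)) ≤ ∑ i, bundleVal v (A i) := by
    calc (n : ℝ) * (⨅ j, bundleVal v (A j)) = ∑ _i : Fin n, (⨅ j, bundleVal v (A j)) := by
          rw [Finset.sum_const, card_univ, Fintype.card_fin, nsmul_eq_mul]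
      _ ≤ ∑ i, bundleVal v (A i) := Finset.sum_le_sum (fun i _ => hcard i)
  rw [hsum] at h2
  have hnpos : (0:ℝ) < n := by exact_mod_cast hn
  rw [show -(1/(n:ℝ)) = -1 / n by ring, le_div_iff₀ hnpos]
  nlinarith

/-- A "good" partial allocation of the items of `S` to the agents in `T`. -/
def GoodAlloc (v : Fin n → Fin m → ℝ) (τ : Fin n → ℝ) (T : Finset (Fin n))
    (S : Finset (Fin m)) (B : Fin n → Finset (Fin m)) : Prop :=
  (∀ i, IsConnBundle (B i)) ∧ (∀ i, B i ⊆ S) ∧ (∀ i, i ∉ T → B i = ∅) ∧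
  (∀ i j, i ≠ j → Disjoint (B i) (B j)) ∧ (∀ e ∈ S, ∃ i, e ∈ B i) ∧
  (∀ i ∈ T, τ i ≤ bundleVal (v i) (B i))

def suff (m x : ℕ) : Finset (Fin m) := univ.filter (fun e => x ≤ (e : ℕ))

lemma mem_suff {x : ℕ} {e : Fin m} : e ∈ suff m x ↔ x ≤ (e : ℕ) := by simp [suff]

lemma suff_zero : suff m 0 = univ := by ext e; simp [suff]

lemma isConn_suff {x : ℕ} : IsConnBundle (suff m x) := by
  intro a ha c _ b hab _
  rw [mem_suff] at *
  exact le_trans ha (by exact_mod_cast hab)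

/-- Witness: a partition of `S` into `k` connected pieces all of value at least `τ`. -/
def HasWitness (v : Fin m → ℝ) (τ : ℝ) (S : Finset (Fin m)) (k : ℕ) : Prop :=
  ∃ W : Fin k → Finset (Fin m),
    (∀ j, IsConnBundle (W j)) ∧ (∀ j, W j ⊆ S) ∧
    (∀ j j', j ≠ j' → Disjoint (W j) (W j')) ∧
    (∀ e ∈ S, ∃ j, e ∈ W j) ∧ (∀ j, τ ≤ bundleVal v (W j))

/-- Endgame: one demanding agent `d` with an all-acceptable witness partition of `S`
into `T.card` pieces; all other agents are relaxed (cannot reject two disjoint bundles).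
Then the pieces can be matched to the agents acceptably. -/
lemma endgame (v : Fin n → Fin m → ℝ) (τ : Fin n → ℝ) (T : Finset (Fin n)) (d : Fin n)
    (hdT : d ∈ T) (S : Finset (Fin m))
    (W : Fin T.card → Finset (Fin m))
    (hWconn : ∀ j, IsConnBundle (W j)) (hWsub : ∀ j, W j ⊆ S)
    (hWdisj : ∀ j j', j ≠ j' → Disjoint (W j) (W j'))
    (hWcov : ∀ e ∈ S, ∃ j, e ∈ W j)
    (hWval : ∀ j, τ d ≤ bundleVal (v d) (W j))
    (hrel : ∀ z ∈ T, z ≠ d → ∀ J J' : Finset (Fin m), Disjoint J J' →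
        τ z ≤ bundleVal (v z) J ∨ τ z ≤ bundleVal (v z) J') :
    ∃ B : Fin n → Finset (Fin m), GoodAlloc v τ T S B := by
  classical
  set dd : {z // z ∈ T} := ⟨d, hdT⟩ with hdd
  let Conf : ({z // z ∈ T} ≃ Fin T.card) → Finset {z // z ∈ T} :=
    fun β => T.attach.filter (fun z => z.1 ≠ d ∧ ¬ (τ z.1 ≤ bundleVal (v z.1) (W (β z))))
  have key : ∀ (c : ℕ) (β : {z // z ∈ T} ≃ Fin T.card), (Conf β).card ≤ c →
      ∃ β : {z // z ∈ T} ≃ Fin T.card, Conf β = ∅ := by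
    intro c
    induction c with
    | zero =>
      intro β hβ
      exact ⟨β, card_eq_zero.mp (Nat.le_antisymm hβ (Nat.zero_le _))⟩
    | succ c ih =>
      intro β hβ
      rcases (Conf β).eq_empty_or_nonempty with h | ⟨z₀, hz₀⟩
      · exact ⟨β, h⟩
      · have hz₀' := hz₀
        rw [mem_filter] at hz₀'
        obtain ⟨-, hz₀ne, hz₀rej⟩ := hz₀'
        have hz₀dd : z₀ ≠ dd := fun h => hz₀ne (by rw [h])
        set β' := β.trans (Equiv.swap (β z₀) (β dd)) with hβ'
        have hβ'z₀ : β' z₀ = β dd := by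
          simp [hβ', Equiv.swap_apply_left]
        have hβ'other : ∀ z, z ≠ z₀ → z ≠ dd → β' z = β z := by
          intro z h1 h2
          simp only [hβ', Equiv.trans_apply]
          exact Equiv.swap_apply_of_ne_of_ne (β.injective.ne h1) (β.injective.ne h2)
        have hz₀ok : τ z₀.1 ≤ bundleVal (v z₀.1) (W (β' z₀)) := by
          rw [hβ'z₀]
          have hne : β z₀ ≠ β dd := β.injective.ne hz₀dd
          rcases hrel z₀.1 z₀.2 hz₀ne (W (β z₀)) (W (β dd)) (hWdisj _ _ hne) with h | h
          · exact absurd h hz₀rej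
          · exact h
        have hsub : Conf β' ⊆ (Conf β).erase z₀ := by
          intro z hz
          rw [mem_filter] at hz
          obtain ⟨hzT, hzne, hzrej⟩ := hz
          have hzz₀ : z ≠ z₀ := by
            rintro rfl; exact hzrej hz₀ok
          have hzdd : z ≠ dd := fun h => hzne (by rw [h])
          rw [mem_erase]
          refine ⟨hzz₀, ?_⟩
          rw [mem_filter]
          exact ⟨hzT, hzne, by rwa [hβ'other z hzz₀ hzdd] at hzrej⟩
        apply ih β'
        have h1 := card_le_card hsub
        have h2 := card_erase_lt_of_mem hz₀
        omega
  obtain ⟨β, hβ⟩ := key _ (T.equivFin) le_rfl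
  have hok : ∀ z : {z // z ∈ T}, z.1 ≠ d → τ z.1 ≤ bundleVal (v z.1) (W (β z)) := by
    intro z hz
    by_contra h
    have : z ∈ Conf β := by
      rw [mem_filter]; exact ⟨mem_attach _ _, hz, h⟩
    rw [hβ] at this
    exact absurd this (notMem_empty _)
  refine ⟨fun i => if h : i ∈ T then W (β ⟨i, h⟩) else ∅, ?_, ?_, ?_, ?_, ?_, ?_⟩
  · intro i
    by_cases h : i ∈ T <;> simp [h, hWconn, isConn_empty]
  · intro i
    by_cases h : i ∈ T <;> simp [h, hWsub]
  · intro i h; simp [h]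
  · intro i j hij
    by_cases hi : i ∈ T
    · by_cases hj : j ∈ T
      · simp only [dif_pos hi, dif_pos hj]
        apply hWdisj
        exact β.injective.ne (fun h => hij (by simpa using congrArg Subtype.val h))
      · simp [hj]
    · simp [hi]
  · intro e he
    obtain ⟨j, hj⟩ := hWcov e he
    refine ⟨(β.symm j).1, ?_⟩
    have h := (β.symm j).2
    simp only [dif_pos h]
    have : (⟨(β.symm j).1, h⟩ : {z // z ∈ T}) = β.symm j := rfl
    rw [this, Equiv.apply_symm_apply]
    exact hj
  · intro i hi
    simp only [dif_pos hi]
    by_cases h : i = d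
    · subst h; exact hWval _
    · exact hok ⟨i, hi⟩ h

/-- The main moving-knife lemma. -/
lemma main_lemma (v : Fin n → Fin m → ℝ) (τ : Fin n → ℝ)
    (hneg : ∀ i e, v i e ≤ 0) :
    ∀ (N : ℕ) (T Dem : Finset (Fin n)) (x : ℕ),
      Dem.card ≤ N → Dem ⊆ T → Dem.Nonempty →
      (∀ d ∈ Dem, HasWitness (v d) (τ d) (suff m x) T.card) →
      (∀ z ∈ T, z ∉ Dem → ∀ J J' : Finset (Fin m), Disjoint J J' →
          τ z ≤ bundleVal (v z) J ∨ τ z ≤ bundleVal (v z) J') →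
      ∃ B : Fin n → Finset (Fin m), GoodAlloc v τ T (suff m x) B := by
  intro N
  induction N with
  | zero =>
    intro T Dem x hcard hsub hne _ _
    have := card_pos.mpr hne
    omega
  | succ N ih =>
    intro T Dem x hcard hsub hne hwit hrel
    classical
    by_cases hDem1 : Dem.card ≤ 1
    · -- ENDGAME: Dem = {d}
      obtain ⟨d, hd⟩ := hne
      have hdT : d ∈ T := hsub hd
      obtain ⟨W, hWconn, hWsub, hWdisj, hWcov, hWval⟩ := hwit d hd
      apply endgame v τ T d hdT _ W hWconn hWsub hWdisj hWcov hWval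
      intro z hzT hzd J J' hJJ
      have hzDem : z ∉ Dem := by
        intro hz
        have : Dem = {d} := by
          apply Finset.eq_singleton_iff_unique_mem.mpr
          refine ⟨hd, fun y hy => ?_⟩
          by_contra hyd
          have : 2 ≤ Dem.card := Finset.one_lt_card.mpr ⟨y, hy, d, hd, hyd⟩
          omega
        rw [this, mem_singleton] at hz
        exact hzd hz
      exact hrel z hzT hzDem J J' hJJ
    · -- KNIFE STEP: Dem.card ≥ 2
      push_neg at hDem1
      rcases (suff m x).eq_empty_or_nonempty with hS | hS
      · -- empty suffix: everyone gets ∅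
        refine ⟨fun _ => ∅, fun _ => isConn_empty, by simp, fun _ _ => rfl,
          fun _ _ _ => disjoint_empty_left _, by simp [hS], ?_⟩
        intro i hi
        rw [show bundleVal (v i) ∅ = 0 by simp [bundleVal]]
        by_cases hiD : i ∈ Dem
        · obtain ⟨W, _, hWsub, _, _, hWval⟩ := hwit i hiD
          have : W ⟨0, by have := card_pos.mpr ⟨i, hi⟩; omega⟩ = ∅ := by
            rw [← subset_empty]
            exact hS ▸ hWsub _
          have hv := hWval ⟨0, by have := card_pos.mpr ⟨i, hi⟩; omega⟩
          rwa [this, show bundleVal (v i) ∅ = 0 by simp [bundleVal]] at hv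
        · rcases hrel i hi hiD ∅ ∅ (disjoint_empty_left _) with h | h <;>
            simpa [bundleVal] using h
      · -- nonempty suffix: moving knife step
        have hne' := hne
        obtain ⟨d₁, hd₁⟩ := hne
        have hTpos : 0 < T.card := card_pos.mpr ⟨d₁, hsub hd₁⟩
        set S : Finset (Fin m) := suff m x with hSdef
        set x₀ : Fin m := S.min' hS with hx₀def
        have hwitA : ∀ d : Fin n, ∃ W : Fin T.card → Finset (Fin m),
            d ∈ Dem → ((∀ j, IsConnBundle (W j)) ∧ (∀ j, W j ⊆ S) ∧
              (∀ j j', j ≠ j' → Disjoint (W j) (W j')) ∧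
              (∀ e ∈ S, ∃ j, e ∈ W j) ∧ (∀ j, τ d ≤ bundleVal (v d) (W j))) := by
          intro d
          by_cases hd : d ∈ Dem
          · obtain ⟨W, hW⟩ := hwit d hd; exact ⟨W, fun _ => hW⟩
          · exact ⟨fun _ => ∅, fun h => absurd h hd⟩
        choose W hW using hwitA
        have hjA : ∀ d : Fin n, ∃ j : Fin T.card, d ∈ Dem → x₀ ∈ W d j := by
          intro d
          by_cases hd : d ∈ Dem
          · obtain ⟨j, hj⟩ := (hW d hd).2.2.2.1 x₀ (S.min'_mem hS)
            exact ⟨j, fun _ => hj⟩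
          · exact ⟨⟨0, hTpos⟩, fun h => absurd h hd⟩
        choose j₀ hj₀ using hjA
        set yv : Fin n → ℕ := fun d =>
          if hd : (W d (j₀ d)).Nonempty then (((W d (j₀ d)).max' hd : Fin m) : ℕ) else 0
          with hyvdef
        have hyv_eq : ∀ d (hd : d ∈ Dem), yv d =
            (((W d (j₀ d)).max' ⟨x₀, hj₀ d hd⟩ : Fin m) : ℕ) := by
          intro d hd
          simp only [hyvdef]
          split
          · rfl
          · exact absurd (⟨x₀, hj₀ d hd⟩ : (W d (j₀ d)).Nonempty) (by assumption)
        set ystar : ℕ := (Dem.image yv).max' (hne'.image yv) with hystar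
        obtain ⟨dstar, hdstar, hydstar⟩ : ∃ d ∈ Dem, yv d = ystar := by
          have := (Dem.image yv).max'_mem (hne'.image yv)
          rw [← hystar] at this
          obtain ⟨d, hd, hyd⟩ := mem_image.mp this
          exact ⟨d, hd, hyd⟩
        have hle : ∀ d ∈ Dem, yv d ≤ ystar := fun d hd =>
          le_max' _ _ (mem_image_of_mem yv hd)
        set P : Finset (Fin m) := W dstar (j₀ dstar) with hPdef
        have hPne : P.Nonempty := ⟨x₀, hj₀ dstar hdstar⟩
        have hx₀P : x₀ ∈ P := hj₀ dstar hdstar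
        have hmaxP : ((P.max' hPne : Fin m) : ℕ) = ystar := by
          rw [← hydstar, hyv_eq dstar hdstar]
        have char : ∀ e : Fin m, e ∈ P ↔ (x ≤ (e : ℕ) ∧ (e : ℕ) ≤ ystar) := by
          intro e
          constructor
          · intro he
            refine ⟨mem_suff.mp ((hW dstar hdstar).2.1 _ he), ?_⟩
            rw [← hmaxP]
            exact_mod_cast P.le_max' e he
          · rintro ⟨hxe, hey⟩
            have heS : e ∈ S := by rw [hSdef]; exact mem_suff.mpr hxe
            have h1 : x₀ ≤ e := S.min'_le e heS
            have h2 : e ≤ P.max' hPne := by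
              rw [Fin.le_def]
              rw [hmaxP]
              exact hey
            exact (hW dstar hdstar).1 (j₀ dstar) x₀ hx₀P (P.max' hPne) (P.max'_mem hPne) e h1 h2
        have hPsubS : P ⊆ S := (hW dstar hdstar).2.1 _
        set S' : Finset (Fin m) := suff m (ystar + 1) with hS'def
        have hdisjPS' : Disjoint P S' := by
          rw [disjoint_left]
          intro e heP heS'
          have h1 := (char e).mp heP
          have h2 := mem_suff.mp heS'
          omega
        have hx₀x : x ≤ (x₀ : ℕ) := mem_suff.mp (S.min'_mem hS)
        have hx₀y : ((x₀ : Fin m) : ℕ) ≤ ystar := ((char x₀).mp hx₀P).2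
        have hS'subS : S' ⊆ S := by
          intro e he
          have h1 : ystar + 1 ≤ (e : ℕ) := mem_suff.mp he
          exact mem_suff.mpr (by omega)
        have hsplit : ∀ e, e ∈ S ↔ e ∈ P ∨ e ∈ S' := by
          intro e
          constructor
          · intro he
            have hxe := mem_suff.mp (hSdef ▸ he)
            by_cases hy : (e : ℕ) ≤ ystar
            · exact Or.inl ((char e).mpr ⟨hxe, hy⟩)
            · exact Or.inr (by rw [hS'def, mem_suff]; omega)
          · rintro (h | h)
            · exact hPsubS h
            · exact hS'subS h
        -- recursion
        set T' : Finset (Fin n) := T.erase dstar with hT'def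
        have hdstarT : dstar ∈ T := hsub hdstar
        have hk : T'.card + 1 = T.card := card_erase_add_one hdstarT
        set Dem' : Finset (Fin n) := Dem.erase dstar with hDem'def
        have hDem'card : Dem'.card + 1 = Dem.card := card_erase_add_one hdstar
        have hDem'ne : Dem'.Nonempty := by
          rw [← card_pos]; omega
        have hsub' : Dem' ⊆ T' := by
          rw [hDem'def, hT'def]; exact erase_subset_erase dstar hsub
        have hwit2 : ∀ d ∈ Dem', HasWitness (v d) (τ d) (suff m (ystar + 1)) T'.card := by
          intro d hd'
          obtain ⟨hdne, hdDem⟩ := mem_erase.mp hd'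
          obtain ⟨hWc, hWs, hWd, hWcov, hWv⟩ := hW d hdDem
          have hfirst : W d (j₀ d) ⊆ P := by
            intro e he
            rw [char]
            refine ⟨mem_suff.mp (hWs _ he), ?_⟩
            have h1 : (e : ℕ) ≤ (((W d (j₀ d)).max' ⟨x₀, hj₀ d hdDem⟩ : Fin m) : ℕ) := by
              exact_mod_cast (W d (j₀ d)).le_max' e he
            rw [← hyv_eq d hdDem] at h1
            exact le_trans h1 (hle d hdDem)
          refine ⟨fun i => W d (Fin.cast hk ((Fin.cast hk.symm (j₀ d)).succAbove i)) ∩ S',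
            ?_, ?_, ?_, ?_, ?_⟩
          · intro j
            exact isConn_inter (hWc _) (hS'def ▸ isConn_suff)
          · intro j
            exact inter_subset_right
          · intro j j' hjj
            apply Finset.disjoint_of_subset_left inter_subset_left
            apply Finset.disjoint_of_subset_right inter_subset_left
            apply hWd
            intro hEq
            exact hjj (Fin.succAbove_right_injective (Fin.cast_injective hk hEq))
          · intro e he
            have heS : e ∈ S := hS'subS he
            obtain ⟨j, hj⟩ := hWcov e heS
            have hjne : j ≠ j₀ d := by
              rintro rfl
              exact (disjoint_left.mp hdisjPS') (hfirst hj) he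
            have hjne' : Fin.cast hk.symm j ≠ Fin.cast hk.symm (j₀ d) := by
              intro hEq
              exact hjne (by simpa using congrArg (Fin.cast hk) hEq)
            obtain ⟨i, hi⟩ := Fin.exists_succAbove_eq hjne'
            refine ⟨i, ?_⟩
            rw [mem_inter]
            refine ⟨?_, he⟩
            rw [hi]
            simpa using hj
          · intro j
            have h1 := hWv (Fin.cast hk ((Fin.cast hk.symm (j₀ d)).succAbove j))
            exact le_trans h1 (bundleVal_anti (hneg d) inter_subset_left)
        have hrel2 : ∀ z ∈ T', z ∉ Dem' → ∀ J J' : Finset (Fin m), Disjoint J J' →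
            τ z ≤ bundleVal (v z) J ∨ τ z ≤ bundleVal (v z) J' := by
          intro z hzT' hzDem' J J' hJJ
          obtain ⟨hzne, hzT⟩ := mem_erase.mp hzT'
          have hzDem : z ∉ Dem := by
            intro hz
            exact hzDem' (mem_erase.mpr ⟨hzne, hz⟩)
          exact hrel z hzT hzDem J J' hJJ
        obtain ⟨B', hB'conn, hB'sub, hB'empty, hB'disj, hB'cov, hB'val⟩ :=
          ih T' Dem' (ystar + 1) (by omega) hsub' hDem'ne hwit2 hrel2
        refine ⟨fun i => if i = dstar then P else B' i, ?_, ?_, ?_, ?_, ?_, ?_⟩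
        · intro i
          by_cases h : i = dstar
          · simpa [h] using (hW dstar hdstar).1 (j₀ dstar)
          · simpa [h] using hB'conn i
        · intro i
          by_cases h : i = dstar
          · simpa [h] using hPsubS
          · simp only [if_neg h]
            exact (hB'sub i).trans hS'subS
        · intro i hi
          have h : i ≠ dstar := fun hEq => hi (hEq ▸ hdstarT)
          simp only [if_neg h]
          exact hB'empty i (fun hT' => hi (mem_of_mem_erase hT'))
        · intro i j hij
          by_cases hi : i = dstar
          · subst hi
            simp only [if_pos rfl, if_neg (Ne.symm hij)]
            exact Finset.disjoint_of_subset_right (hB'sub j) hdisjPS'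
          · by_cases hj : j = dstar
            · subst hj
              simp only [if_neg hi, if_pos rfl]
              exact Finset.disjoint_of_subset_left (hB'sub i) hdisjPS'.symm
            · simp only [if_neg hi, if_neg hj]
              exact hB'disj i j hij
        · intro e he
          rcases (hsplit e).mp he with h | h
          · exact ⟨dstar, by simpa using h⟩
          · obtain ⟨i, hi⟩ := hB'cov e h
            refine ⟨i, ?_⟩
            have hine : i ≠ dstar := by
              intro hEq
              rw [hEq, hB'empty dstar (notMem_erase _ _)] at hi
              exact absurd hi (notMem_empty _)
            simpa [hine] using hi
        · intro i hi
          show τ i ≤ bundleVal (v i) (if i = dstar then P else B' i)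
          by_cases h : i = dstar
          · have h2 : (if i = dstar then P else B' i) = P := if_pos h
            rw [h2, h]
            exact (hW dstar hdstar).2.2.2.2 (j₀ dstar)
          · simp only [if_neg h]
            exact hB'val i (mem_erase.mpr ⟨h, hi⟩)


end Chores

/-- For every fair-chores instance with `n ≥ 3` agents, there exists a
connected MMS allocation whose egalitarian welfare is at least `(n/2) · OPT_E`
(note `OPT_E ≤ 0`). -/
theorem chores_egalitarian_mms_exists (n m : ℕ) (hn : 3 ≤ n)
    (v : Fin n → Fin m → ℝ)
    (hneg : ∀ i j, v i j ≤ 0)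
    (hnorm : ∀ i, bundleVal (v i) Finset.univ = -1) :
    ∃ A : Fin n → Finset (Fin m), ConnAlloc n m A ∧
      (∀ i, mmsVal n m (v i) ≤ bundleVal (v i) (A i)) ∧
      ((n : ℝ) / 2) * optE n m v ≤ egalW n m v A := by
  classical
  have hn0 : 0 < n := by omega
  obtain ⟨Astar, hAstar, hEeq⟩ := Chores.optE_mem (m := m) hn0 (v := v)
  have hE0 : optE n m v ≤ 0 := by
    rw [optE]
    apply csSup_le
    · exact ⟨egalW n m v (Chores.trivAlloc n m hn0), Chores.trivAlloc n m hn0,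
        Chores.trivAlloc_conn hn0, rfl⟩
    rintro b ⟨A, hA, rfl⟩
    calc egalW n m v A ≤ bundleVal (v ⟨0, hn0⟩) (A ⟨0, hn0⟩) := Chores.inf_le_piece _
      _ ≤ 0 := Chores.bundleVal_nonpos (hneg _) _
  have hmmsle : ∀ i, mmsVal n m (v i) ≤ -(1/n) :=
    fun i => Chores.mmsVal_le hn0 (v i) (hnorm i)
  have hstar_ge : ∀ i, optE n m v ≤ bundleVal (v i) (Astar i) := by
    intro i; rw [hEeq]; exact Chores.inf_le_piece i
  have hn3 : (3:ℝ) ≤ n := by exact_mod_cast hn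
  have hhalf : ((n:ℝ)/2) * optE n m v ≤ optE n m v := by nlinarith
  by_cases hcase : -(1/(n:ℝ)) ≤ optE n m v
  · -- Case B : the optimal egalitarian allocation is itself MMS
    refine ⟨Astar, hAstar, fun i => le_trans (le_trans (hmmsle i) hcase) (hstar_ge i), ?_⟩
    rw [← hEeq]
    exact hhalf
  · push_neg at hcase
    set t : ℝ := ((n:ℝ)/2) * optE n m v with ht
    set τ : Fin n → ℝ := fun i => max (mmsVal n m (v i)) t with hτ
    have htle : t ≤ -(1/2 : ℝ) := by
      have h2 : (0:ℝ) < n := by exact_mod_cast hn0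
      rw [ht]
      calc ((n:ℝ)/2) * optE n m v ≤ ((n:ℝ)/2) * (-(1/n)) := by
            apply mul_le_mul_of_nonneg_left (le_of_lt hcase) (by positivity)
        _ = -(1/2) := by
            field_simp
    have hrelax : ∀ z, mmsVal n m (v z) < t → ∀ J J' : Finset (Fin m), Disjoint J J' →
        τ z ≤ bundleVal (v z) J ∨ τ z ≤ bundleVal (v z) J' := by
      intro z hz J J' hdisj
      have hτz : τ z = t := max_eq_right (le_of_lt hz)
      by_contra hcon
      push_neg at hcon
      obtain ⟨h1, h2⟩ := hcon
      rw [hτz] at h1 h2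
      have h3 : bundleVal (v z) univ ≤ bundleVal (v z) (J ∪ J') :=
        Chores.bundleVal_anti (hneg z) (subset_univ _)
      rw [hnorm z, Chores.bundleVal_union hdisj] at h3
      linarith
    set Dem : Finset (Fin n) := univ.filter (fun i => t ≤ mmsVal n m (v i)) with hDem
    have hnotDem : ∀ i, i ∉ Dem → mmsVal n m (v i) < t := by
      intro i hi
      by_contra hcon
      push_neg at hcon
      exact hi (mem_filter.mpr ⟨mem_univ _, hcon⟩)
    rcases Dem.eq_empty_or_nonempty with hDemE | hDemNe
    · -- everyone is relaxed: the optimal egalitarian allocation works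
      refine ⟨Astar, hAstar, ?_, ?_⟩
      · intro i
        have hi : mmsVal n m (v i) < t := hnotDem i (by rw [hDemE]; exact notMem_empty _)
        calc mmsVal n m (v i) ≤ t := le_of_lt hi
          _ ≤ optE n m v := hhalf
          _ ≤ _ := hstar_ge i
      · rw [← hEeq]; exact hhalf
    · -- run the moving knife
      have hwit : ∀ d ∈ Dem, Chores.HasWitness (v d) (τ d) (Chores.suff m 0)
          (univ : Finset (Fin n)).card := by
        intro d hd
        obtain ⟨P, hP, hPeq⟩ := Chores.mms_mem hn0 (v d)
        have hτd : τ d = mmsVal n m (v d) := max_eq_left (mem_filter.mp hd).2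
        obtain ⟨hPconn, hPdisj, hPcov⟩ := hP
        rw [Chores.suff_zero, card_univ, Fintype.card_fin]
        exact ⟨P, hPconn, fun j => subset_univ _, fun j j' h => hPdisj j j' h,
          fun e _ => hPcov e, fun j => by rw [hτd, hPeq]; exact Chores.inf_le_piece j⟩
      have hrel2 : ∀ z ∈ (univ : Finset (Fin n)), z ∉ Dem →
          ∀ J J' : Finset (Fin m), Disjoint J J' →
          τ z ≤ bundleVal (v z) J ∨ τ z ≤ bundleVal (v z) J' := by
        intro z _ hz J J' hd
        exact hrelax z (hnotDem z hz) J J' hd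
      obtain ⟨B, hBconn, hBsub, hBempty, hBdisj, hBcov, hBval⟩ :=
        Chores.main_lemma v τ hneg Dem.card univ Dem 0 le_rfl (subset_univ _)
          hDemNe hwit hrel2
      refine ⟨B, ⟨hBconn, fun i j h => hBdisj i j h, fun e => ?_⟩, ?_, ?_⟩
      · exact hBcov e (by rw [Chores.suff_zero]; exact mem_univ e)
      · intro i
        exact le_trans (le_max_left _ _) (hBval i (mem_univ i))
      · apply Chores.le_inf_pieces hn0
        intro i
        exact le_trans (le_max_right _ _) (hBval i (mem_univ i))
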